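/- arXiv:2312.10794 — 5 statements merged into one kernel-verified Lean document; each statement's English description precedes it below -/
import Mathlib

section
/- Any global maximizer of the interaction energy E_β over probability measures on S^{d-1} is a Dirac mass δ_{x*} at some point x* ∈ S^{d-1}. -/
open MeasureTheory
open scoped RealInnerProductSpace

/-- The interaction energy `E_β[μ] = (1/(2β)) ∬ e^{β⟨x,x'⟩} dμ(x) dμ(x')` on
probability measures over the unit sphere. -/
noncomputable def interactionEnergy {d : ℕ} (β : ℝ)
    (μ : Measure (Metric.sphere (0 : EuclideanSpace ℝ (Fin d)) 1)) : ℝ :=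
  (1 / (2 * β)) *
    ∫ x, ∫ y, Real.exp (β * ⟪(x : EuclideanSpace ℝ (Fin d)),
      (y : EuclideanSpace ℝ (Fin d))⟫) ∂μ ∂μ

/-- Any global maximizer of the interaction energy `E_β` over probability measures
on `S^{d-1}` is a Dirac mass at some point of the sphere. -/
theorem stmt_2 {d : ℕ} (hd : 2 ≤ d) (β : ℝ) (hβ : 0 < β)
    (μ : Measure (Metric.sphere (0 : EuclideanSpace ℝ (Fin d)) 1))
    [IsProbabilityMeasure μ]
    (hmax : ∀ ν : Measure (Metric.sphere (0 : EuclideanSpace ℝ (Fin d)) 1),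
      IsProbabilityMeasure ν → interactionEnergy β ν ≤ interactionEnergy β μ) :
    ∃ x : Metric.sphere (0 : EuclideanSpace ℝ (Fin d)) 1, μ = Measure.dirac x := by
  have hd0 : 0 < d := by omega
  let i0 : Fin d := ⟨0, hd0⟩
  have hx₀mem : EuclideanSpace.single i0 (1:ℝ) ∈ Metric.sphere (0 : EuclideanSpace ℝ (Fin d)) 1 := by
    simp [mem_sphere_zero_iff_norm, EuclideanSpace.norm_single]
  let x₀ : Metric.sphere (0 : EuclideanSpace ℝ (Fin d)) 1 := ⟨_, hx₀mem⟩
  set F : (Metric.sphere (0 : EuclideanSpace ℝ (Fin d)) 1) ×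
      (Metric.sphere (0 : EuclideanSpace ℝ (Fin d)) 1) → ℝ :=
    fun p => Real.exp (β * ⟪(p.1 : EuclideanSpace ℝ (Fin d)),
      (p.2 : EuclideanSpace ℝ (Fin d))⟫) with hF
  have hFc : Continuous F := by
    apply Real.continuous_exp.comp
    exact continuous_const.mul
      ((continuous_subtype_val.comp continuous_fst).inner
        (continuous_subtype_val.comp continuous_snd))
  have hnorm : ∀ x : Metric.sphere (0 : EuclideanSpace ℝ (Fin d)) 1,
      ‖(x : EuclideanSpace ℝ (Fin d))‖ = 1 := fun x => by
    simpa [mem_sphere_zero_iff_norm] using x.2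
  have hFle : ∀ p, F p ≤ Real.exp β := by
    intro p
    apply Real.exp_le_exp.2
    have h := real_inner_le_norm (p.1 : EuclideanSpace ℝ (Fin d)) (p.2 : EuclideanSpace ℝ (Fin d))
    rw [hnorm, hnorm, one_mul] at h
    nlinarith
  have hFint : Integrable F (μ.prod μ) :=
    hFc.integrable_of_hasCompactSupport
      (IsCompact.of_isClosed_subset isCompact_univ (isClosed_tsupport F) (Set.subset_univ _))
  -- energy of dirac x₀
  have hdir : interactionEnergy β (Measure.dirac x₀) = (1 / (2*β)) * Real.exp β := by
    have hxx : ⟪(x₀ : EuclideanSpace ℝ (Fin d)), (x₀ : EuclideanSpace ℝ (Fin d))⟫ = 1 := by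
      rw [real_inner_self_eq_norm_sq, hnorm, one_pow]
    simp [interactionEnergy, integral_dirac, hxx]
  have h1 := hmax (Measure.dirac x₀) inferInstance
  rw [hdir] at h1
  have h2β : (0:ℝ) < 1 / (2*β) := by positivity
  have hIle : Real.exp β ≤ ∫ x, ∫ y, F (x, y) ∂μ ∂μ :=
    (mul_le_mul_iff_right₀ h2β).1 h1
  -- rewrite as a product integral
  have hIle2 : Real.exp β ≤ ∫ p, F p ∂(μ.prod μ) := by
    rw [integral_integral (μ := μ) (ν := μ) (f := fun x y => F (x, y)) (by exact hFint)] at hIle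
    exact hIle
  -- upper bound
  have hconst : Integrable (fun _ : (Metric.sphere (0 : EuclideanSpace ℝ (Fin d)) 1) ×
      (Metric.sphere (0 : EuclideanSpace ℝ (Fin d)) 1) => Real.exp β) (μ.prod μ) :=
    integrable_const _
  have hIge : ∫ p, F p ∂(μ.prod μ) ≤ Real.exp β := by
    calc ∫ p, F p ∂(μ.prod μ) ≤ ∫ _p, Real.exp β ∂(μ.prod μ) :=
          integral_mono hFint hconst hFle
      _ = Real.exp β := by simp
  have hIeq : ∫ p, F p ∂(μ.prod μ) = Real.exp β := le_antisymm hIge hIle2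
  -- the defect integrates to zero
  have hzero : ∫ p, (Real.exp β - F p) ∂(μ.prod μ) = 0 := by
    rw [integral_sub hconst hFint]
    simp [hIeq]
  have hae : (fun p => Real.exp β - F p) =ᵐ[μ.prod μ] 0 :=
    (integral_eq_zero_iff_of_nonneg (f := fun p => Real.exp β - F p)
      (fun p => by have := hFle p; simp only [Pi.zero_apply]; linarith)
      (by exact hconst.sub hFint)).1 hzero
  -- hence a.e. equality of the endpoints
  have haediag : ∀ᵐ p : (Metric.sphere (0 : EuclideanSpace ℝ (Fin d)) 1) ×
      (Metric.sphere (0 : EuclideanSpace ℝ (Fin d)) 1) ∂(μ.prod μ), p.1 = p.2 := by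
    filter_upwards [hae] with p hp
    have hFeq : F p = Real.exp β := by
      have := hp
      simp only [Pi.zero_apply] at this
      linarith
    have hinner : ⟪(p.1 : EuclideanSpace ℝ (Fin d)), (p.2 : EuclideanSpace ℝ (Fin d))⟫ = 1 :=
      mul_left_cancel₀ (ne_of_gt hβ) (by rw [mul_one]; exact Real.exp_injective hFeq)
    exact Subtype.ext ((inner_eq_one_iff_of_norm_eq_one (hnorm p.1) (hnorm p.2)).1 hinner)
  -- the diagonal has full measure
  have hDmeas : MeasurableSet {p : (Metric.sphere (0 : EuclideanSpace ℝ (Fin d)) 1) ×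
      (Metric.sphere (0 : EuclideanSpace ℝ (Fin d)) 1) | p.1 = p.2} :=
    (isClosed_eq continuous_fst continuous_snd).measurableSet
  have hDfull : (μ.prod μ) {p | p.1 = p.2} = 1 := by
    rw [← prob_compl_eq_zero_iff hDmeas]
    exact haediag
  -- Fubini for the diagonal
  have heq : ∀ x : (Metric.sphere (0 : EuclideanSpace ℝ (Fin d)) 1),
      Prod.mk x ⁻¹' {p : (Metric.sphere (0 : EuclideanSpace ℝ (Fin d)) 1) ×
        (Metric.sphere (0 : EuclideanSpace ℝ (Fin d)) 1) | p.1 = p.2} = {x} := by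
    intro x; ext y; simp [eq_comm]
  have hfub : ∫⁻ x, μ {x} ∂μ = 1 := by
    calc ∫⁻ x, μ {x} ∂μ
        = ∫⁻ x, μ (Prod.mk x ⁻¹' {p : (Metric.sphere (0 : EuclideanSpace ℝ (Fin d)) 1) ×
            (Metric.sphere (0 : EuclideanSpace ℝ (Fin d)) 1) | p.1 = p.2}) ∂μ :=
          lintegral_congr fun x => by rw [heq]
      _ = (μ.prod μ) {p | p.1 = p.2} := (Measure.prod_apply hDmeas).symm
      _ = 1 := hDfull
  -- a.e. x, μ {x} = 1
  have hmeasb : Measurable fun x : (Metric.sphere (0 : EuclideanSpace ℝ (Fin d)) 1) => μ {x} := by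
    have := measurable_measure_prodMk_left (ν := μ) hDmeas
    simpa only [heq] using this
  have hle1 : ∀ x : (Metric.sphere (0 : EuclideanSpace ℝ (Fin d)) 1), μ {x} ≤ 1 :=
    fun x => prob_le_one
  have haeone : ∀ᵐ x ∂μ, μ {x} = 1 := by
    have hsub : ∫⁻ x, (1 - μ {x}) ∂μ = 0 := by
      rw [lintegral_sub hmeasb (by simp [hfub]) (Filter.Eventually.of_forall hle1)]
      simp [hfub]
    have := (lintegral_eq_zero_iff (measurable_const.sub hmeasb)).1 hsub
    filter_upwards [this] with x hx
    simp only [Pi.zero_apply] at hx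
    have h1le : 1 ≤ μ {x} := by
      by_contra hlt
      push_neg at hlt
      exact absurd hx (by simp [tsub_eq_zero_iff_le, not_le.2 hlt])
    exact le_antisymm (hle1 x) h1le
  obtain ⟨x, hx⟩ := haeone.exists
  refine ⟨x, ?_⟩
  ext s hs
  rw [Measure.dirac_apply' x hs]
  by_cases hxs : x ∈ s
  · have : μ {x} ≤ μ s := measure_mono (Set.singleton_subset_iff.2 hxs)
    rw [hx] at this
    simp [Set.indicator_of_mem hxs, le_antisymm prob_le_one this]
  · have hcompl : μ {(x : (Metric.sphere (0 : EuclideanSpace ℝ (Fin d)) 1))}ᶜ = 0 := by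
      rw [measure_compl (measurableSet_singleton x) (by simp [hx]), hx]
      simp
    have : μ s ≤ μ {(x : (Metric.sphere (0 : EuclideanSpace ℝ (Fin d)) 1))}ᶜ :=
      measure_mono (fun y hy => by simp; rintro rfl; exact hxs hy)
    simp [Set.indicator_of_notMem hxs, le_antisymm (hcompl ▸ this) zero_le]
end

section
/- Let E_0(x_1,...,x_n) = (1/n) Σ_i Σ_j ⟨x_i, x_j⟩ on (S^{d-1})^n. If (x_1,...,x_n) is a critical point of E_0 at which the points are not all equal, then there exists a subset S ⊆ [n] with Σ_{i∈S} Σ_{j∈S^c} ⟨x_i, x_j⟩ ≤ -1. -/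
open scoped RealInnerProductSpace

/-- If `(x_1,…,x_n)` is a critical point of `E_0(x) = (1/n) Σ_{i,j} ⟨x_i,x_j⟩` on
`(S^{d-1})^n` (i.e. the tangential projection of `Σ_j x_j` at each `x_i` vanishes)
at which the points are not all equal, then there is a subset `S ⊆ [n]` with
`Σ_{i∈S} Σ_{j∈Sᶜ} ⟨x_i, x_j⟩ ≤ -1`. -/
theorem stmt_9 {d n : ℕ} (hd : 2 ≤ d) (hn : 2 ≤ n)
    (x : Fin n → EuclideanSpace ℝ (Fin d))
    (hsphere : ∀ i, x i ∈ Metric.sphere (0 : EuclideanSpace ℝ (Fin d)) 1)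
    (hcrit : ∀ i, (∑ j, x j) - ⟪x i, ∑ j, x j⟫ • x i = 0)
    (hneq : ¬ ∀ i j, x i = x j) :
    ∃ S : Finset (Fin n), ∑ i ∈ S, ∑ j ∈ Sᶜ, ⟪x i, x j⟫ ≤ -1 := by
  have i0 : Fin n := ⟨0, by omega⟩
  set s : EuclideanSpace ℝ (Fin d) := ∑ j, x j with hs
  have hnorm : ∀ i, ‖x i‖ = 1 := fun i => mem_sphere_zero_iff_norm.mp (hsphere i)
  have hself : ∀ i, ⟪x i, x i⟫ = 1 := by
    intro i
    rw [real_inner_self_eq_norm_sq, hnorm i]; norm_num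
  have hci : ∀ i, s = ⟪x i, s⟫ • x i := fun i => sub_eq_zero.mp (hcrit i)
  by_cases h0 : s = 0
  · -- take S = {i0}
    refine ⟨{i0}, ?_⟩
    have hsum : ∑ j ∈ ({i0} : Finset (Fin n))ᶜ, x j = -(x i0) := by
      have h1 := Finset.sum_add_sum_compl ({i0} : Finset (Fin n)) x
      rw [Finset.sum_singleton, ← hs, h0] at h1
      exact eq_neg_of_add_eq_zero_left (by rw [add_comm]; exact h1)
    rw [Finset.sum_singleton, ← inner_sum, hsum, inner_neg_right, hself i0]
  · have hsn : (0 : ℝ) < ‖s‖ := norm_pos_iff.mpr h0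
    have habs : ∀ i, ⟪x i, s⟫ = ‖s‖ ∨ ⟪x i, s⟫ = -‖s‖ := by
      intro i
      have h1 : ‖s‖ = |⟪x i, s⟫| := by
        conv_lhs => rw [hci i]
        rw [norm_smul, hnorm i, Real.norm_eq_abs, mul_one]
      rcases abs_cases (⟪x i, s⟫) with ⟨h, _⟩ | ⟨h, _⟩
      · left; rw [h1, h]
      · right; rw [h1, h]; ring
    have hx : ∀ i, x i = (⟪x i, s⟫)⁻¹ • s := by
      intro i
      have hc0 : ⟪x i, s⟫ ≠ 0 := by
        rcases habs i with h | h <;> rw [h] <;> [exact ne_of_gt hsn; exact ne_of_lt (by linarith)]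
      rw [eq_inv_smul_iff₀ hc0]
      exact (hci i).symm
    set S : Finset (Fin n) := Finset.univ.filter (fun i => 0 < ⟪x i, s⟫) with hS
    have hmemS : ∀ i ∈ S, ⟪x i, s⟫ = ‖s‖ := by
      intro i hi
      rw [hS, Finset.mem_filter] at hi
      rcases habs i with h | h
      · exact h
      · exfalso; have := hi.2; rw [h] at this; linarith
    have hmemSc : ∀ j ∈ Sᶜ, ⟪x j, s⟫ = -‖s‖ := by
      intro j hj
      rw [Finset.mem_compl, hS, Finset.mem_filter] at hj
      push_neg at hj
      rcases habs j with h | h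
      · exfalso; have := hj (Finset.mem_univ j); rw [h] at this; linarith
      · exact h
    have hinner : ∀ i ∈ S, ∀ j ∈ Sᶜ, ⟪x i, x j⟫ = -1 := by
      intro i hi j hj
      rw [hx i, hx j, hmemS i hi, hmemSc j hj, real_inner_smul_left, real_inner_smul_right,
        real_inner_self_eq_norm_sq]
      field_simp
    -- both S and Sᶜ nonempty
    push_neg at hneq
    obtain ⟨i, j, hij⟩ := hneq
    have hsign : (i ∈ S ∧ j ∈ Sᶜ) ∨ (j ∈ S ∧ i ∈ Sᶜ) := by
      by_contra hcon
      push_neg at hcon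
      have hcc : ⟪x i, s⟫ = ⟪x j, s⟫ := by
        by_cases hiS : i ∈ S
        · have hjS : j ∈ S := by
            by_contra hjS
            exact (hcon.1 hiS) (Finset.mem_compl.mpr hjS)
          rw [hmemS i hiS, hmemS j hjS]
        · have hiSc : i ∈ Sᶜ := Finset.mem_compl.mpr hiS
          have hjSc : j ∈ Sᶜ := by
            by_contra hjS
            rw [Finset.mem_compl, not_not] at hjS
            exact (hcon.2 hjS) hiSc
          rw [hmemSc i hiSc, hmemSc j hjSc]
      exact hij (by rw [hx i, hx j, hcc])
    have hScard : 1 ≤ S.card := by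
      rcases hsign with ⟨h, _⟩ | ⟨h, _⟩ <;> exact Finset.card_pos.mpr ⟨_, h⟩
    have hSccard : 1 ≤ Sᶜ.card := by
      rcases hsign with ⟨_, h⟩ | ⟨_, h⟩ <;> exact Finset.card_pos.mpr ⟨_, h⟩
    refine ⟨S, ?_⟩
    have : ∑ i ∈ S, ∑ j ∈ Sᶜ, ⟪x i, x j⟫ = ∑ i ∈ S, ∑ j ∈ Sᶜ, (-1 : ℝ) := by
      refine Finset.sum_congr rfl fun i hi => Finset.sum_congr rfl fun j hj => ?_
      exact hinner i hi j hj
    rw [this, Finset.sum_const, Finset.sum_const]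
    have hcard : (1 : ℝ) ≤ (S.card : ℝ) * (Sᶜ.card : ℝ) := by
      have := Nat.mul_le_mul hScard hSccard
      exact_mod_cast this
    simp only [nsmul_eq_mul, mul_neg, mul_one]
    nlinarith
  done
end

section
/- For odd d, the negative identity matrix admits the representation -I_d = (1/(d-1)) Σ_{j=1}^{d} B_j², where B_j is the d×d block-diagonal matrix built from repeated 2×2 blocks [[0,1],[-1,0]] except that the j-th diagonal position is replaced by a 1×1 zero block; each B_j is skew-symmetric. -/
open Matrix
/-- The skew-symmetric matrix `B_j`: block-diagonal with repeated `2×2` blocks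
`[[0,1],[-1,0]]` placed on the indices other than `j` (taken in increasing order
and paired consecutively), with a `1×1` zero block at position `j`. -/
def Bmat (d : ℕ) (j : Fin d) : Matrix (Fin d) (Fin d) ℝ :=
  fun i k =>
    if i = j ∨ k = j then 0
    else
      let ri : ℕ := if (i : ℕ) < (j : ℕ) then (i : ℕ) else (i : ℕ) - 1
      let rk : ℕ := if (k : ℕ) < (j : ℕ) then (k : ℕ) else (k : ℕ) - 1
      if rk = ri + 1 ∧ ri % 2 = 0 then 1
      else if ri = rk + 1 ∧ rk % 2 = 0 then -1
      else 0

noncomputable def fAux (a b : ℕ) : ℝ :=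
  if b = a + 1 ∧ a % 2 = 0 then 1
  else if a = b + 1 ∧ b % 2 = 0 then -1
  else 0

lemma fAux_eq_zero {x a : ℕ} (h : a ≠ (if x % 2 = 0 then x + 1 else x - 1)) :
    fAux x a = 0 := by
  unfold fAux
  by_cases hx2 : x % 2 = 0
  · rw [if_pos hx2] at h
    split_ifs with h1 h2 <;> [skip; skip; rfl] <;> exfalso <;> omega
  · rw [if_neg hx2] at h
    split_ifs with h1 h2 <;> [skip; skip; rfl] <;> exfalso <;> omega

lemma fsq (n x y : ℕ) (hn : n % 2 = 0) (hx : x < n) (hy : y < n) :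
    ∑ a ∈ Finset.range n, fAux x a * fAux a y = if x = y then -1 else 0 := by
  set p : ℕ := if x % 2 = 0 then x + 1 else x - 1 with hp
  have hpn : p ∈ Finset.range n := by
    simp only [Finset.mem_range, hp]; split_ifs <;> omega
  rw [Finset.sum_eq_single_of_mem p hpn (fun b _ hb => by
    rw [fAux_eq_zero hb, zero_mul])]
  by_cases hx2 : x % 2 = 0
  · have hp' : p = x + 1 := by simp [hp, hx2]
    rw [hp']
    have h1 : fAux x (x + 1) = 1 := by unfold fAux; simp [hx2]
    have h2 : fAux (x + 1) y = if x = y then -1 else 0 := by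
      unfold fAux; split_ifs <;> first | rfl | omega
    rw [h1, h2, one_mul]
  · have hp' : p = x - 1 := by simp [hp, hx2]
    rw [hp']
    have h1 : fAux x (x - 1) = -1 := by unfold fAux; split_ifs <;> first | rfl | omega
    have h2 : fAux (x - 1) y = if x = y then 1 else 0 := by
      unfold fAux; split_ifs <;> first | rfl | omega
    rw [h1, h2]
    split_ifs <;> ring

lemma fAux_antisymm (a b : ℕ) : fAux b a = - fAux a b := by
  unfold fAux; split_ifs <;> first | (exfalso; omega) | norm_num

lemma Bmat_apply (d : ℕ) (j i k : Fin d) (hi : i ≠ j) (hk : k ≠ j) :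
    Bmat d j i k =
      fAux (if (i : ℕ) < (j : ℕ) then (i : ℕ) else (i : ℕ) - 1)
           (if (k : ℕ) < (j : ℕ) then (k : ℕ) else (k : ℕ) - 1) := by
  unfold Bmat fAux
  rw [if_neg (by tauto)]

lemma Bmat_apply_left (d : ℕ) (j k : Fin d) : Bmat d j j k = 0 := by
  unfold Bmat; rw [if_pos (Or.inl rfl)]

lemma Bmat_apply_right (d : ℕ) (j i : Fin d) : Bmat d j i j = 0 := by
  unfold Bmat; rw [if_pos (Or.inr rfl)]

lemma Bsq (d : ℕ) (hodd : Odd d) (j i k : Fin d) :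
    (Bmat d j * Bmat d j) i k =
      if i = j ∨ k = j then 0 else if i = k then -1 else 0 := by
  rw [Matrix.mul_apply]
  by_cases hi : i = j
  · subst hi; simp [Bmat_apply_left]
  by_cases hk : k = j
  · subst hk; simp [Bmat_apply_right]
  rw [if_neg (by tauto)]
  obtain ⟨n, rfl⟩ : ∃ n, d = n + 1 := ⟨d - 1, by omega⟩
  have hn : n % 2 = 0 := by obtain ⟨m, hm⟩ := hodd; omega
  set ri : ℕ := if (i : ℕ) < (j : ℕ) then (i : ℕ) else (i : ℕ) - 1 with hri
  set rk : ℕ := if (k : ℕ) < (j : ℕ) then (k : ℕ) else (k : ℕ) - 1 with hrk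
  have hij : (i : ℕ) ≠ (j : ℕ) := fun h => hi (Fin.ext h)
  have hkj : (k : ℕ) ≠ (j : ℕ) := fun h => hk (Fin.ext h)
  have hin : (i : ℕ) < n + 1 := i.isLt
  have hkn : (k : ℕ) < n + 1 := k.isLt
  have hjn : (j : ℕ) < n + 1 := j.isLt
  have hrin : ri < n := by rw [hri]; split_ifs <;> omega
  have hrkn : rk < n := by rw [hrk]; split_ifs <;> omega
  have hred : ∀ a : Fin n,
      (if ((j.succAbove a : Fin (n + 1)) : ℕ) < (j : ℕ)
        then ((j.succAbove a : Fin (n + 1)) : ℕ)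
        else ((j.succAbove a : Fin (n + 1)) : ℕ) - 1) = (a : ℕ) := by
    intro a
    rw [Fin.succAbove]
    by_cases h : (a.castSucc : Fin (n + 1)) < j
    · rw [if_pos h]
      have hv := Fin.lt_iff_val_lt_val.mp h
      simp only [Fin.coe_castSucc] at hv ⊢
      rw [if_pos hv]
    · rw [if_neg h]
      have hv := Fin.lt_iff_val_lt_val.not.mp h
      simp only [Fin.coe_castSucc] at hv
      simp only [Fin.val_succ]
      rw [if_neg (by omega)]
      omega
  rw [Fin.sum_univ_succAbove
    (fun m => Bmat (n + 1) j i m * Bmat (n + 1) j m k) j]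
  simp only [Bmat_apply_right, zero_mul, zero_add]
  have hterm : ∀ a : Fin n,
      Bmat (n + 1) j i (j.succAbove a) * Bmat (n + 1) j (j.succAbove a) k
        = fAux ri (a : ℕ) * fAux (a : ℕ) rk := by
    intro a
    rw [Bmat_apply _ _ _ _ hi (Fin.succAbove_ne j a),
        Bmat_apply _ _ _ _ (Fin.succAbove_ne j a) hk, hred a, ← hri, ← hrk]
  simp only [hterm]
  rw [Fin.sum_univ_eq_sum_range (fun a => fAux ri a * fAux a rk) n,
      fsq n ri rk hn hrin hrkn]
  have hiff : ri = rk ↔ i = k := by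
    rw [hri, hrk, Fin.ext_iff]
    split_ifs <;> omega
  by_cases h : i = k
  · rw [if_pos (hiff.mpr h), if_pos h]
  · rw [if_neg (fun hc => h (hiff.mp hc)), if_neg h]

/-- For odd `d` (with `d ≥ 2`, hence `d ≥ 3`), each `B_j` is skew-symmetric and
`-I_d = (1/(d-1)) Σ_{j=1}^d B_j²`. -/
theorem stmt_10 (d : ℕ) (hd : 2 ≤ d) (hodd : Odd d) :
    (∀ j : Fin d, (Bmat d j)ᵀ = -(Bmat d j)) ∧
      -(1 : Matrix (Fin d) (Fin d) ℝ) =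
        ((d : ℝ) - 1)⁻¹ • ∑ j : Fin d, (Bmat d j) ^ 2 := by
  constructor
  · intro j
    ext i k
    simp only [Matrix.transpose_apply, Matrix.neg_apply]
    by_cases h : i = j ∨ k = j
    · unfold Bmat
      rw [if_pos h.symm, if_pos h, neg_zero]
    · rw [Bmat_apply d j k i (fun hc => h (Or.inr hc)) (fun hc => h (Or.inl hc)),
          Bmat_apply d j i k (fun hc => h (Or.inl hc)) (fun hc => h (Or.inr hc))]
      exact fAux_antisymm _ _
  · ext i k
    have lhs : (∑ j : Fin d, (Bmat d j) ^ 2) i k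
        = ∑ j : Fin d, (if i = j ∨ k = j then (0:ℝ) else if i = k then -1 else 0) := by
      rw [Matrix.sum_apply]
      exact Finset.sum_congr rfl (fun j _ => by rw [pow_two]; exact Bsq d hodd j i k)
    rw [Matrix.smul_apply, lhs, Matrix.neg_apply, Matrix.one_apply]
    by_cases hik : i = k
    · subst hik
      rw [if_pos rfl]
      have hsum : ∑ j : Fin d, (if i = j ∨ i = j then (0:ℝ) else if i = i then -1 else 0)
          = 1 - d := by
        have h1 : ∀ j : Fin d, (if i = j ∨ i = j then (0:ℝ) else if i = i then -1 else 0)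
            = (if i = j then (1:ℝ) else 0) - 1 := by
          intro j; by_cases h : i = j
          · rw [if_pos (Or.inl h), if_pos h]; ring
          · rw [if_neg (by tauto), if_pos rfl, if_neg h]; ring
        rw [Finset.sum_congr rfl (fun j _ => h1 j), Finset.sum_sub_distrib,
          Finset.sum_ite_eq Finset.univ i (fun _ => (1:ℝ))]
        simp [Finset.card_univ]
      rw [hsum]
      have hne : (d:ℝ) - 1 ≠ 0 := by
        have h2 : (2:ℝ) ≤ (d:ℝ) := by exact_mod_cast hd
        linarith
      rw [smul_eq_mul]
      field_simp
      ring
    · rw [if_neg hik]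
      have h0 : ∀ j : Fin d, (if i = j ∨ k = j then (0:ℝ) else if i = k then -1 else 0)
          = 0 := by
        intro j; split_ifs <;> first | rfl | exact absurd ‹i = k› hik
      rw [Finset.sum_congr rfl (fun j _ => h0 j)]
      simp
end

section
/- Let n ≥ 2, β ≥ 0, and let γ be the solution of the ODE γ'(t) = 2 e^{βγ(t)}(1-γ(t))((n-1)γ(t)+1) / (e^β + (n-1)e^{βγ(t)}) with γ(0) = 0. Then γ is non-decreasing, 0 ≤ γ(t) ≤ 1 for all t ≥ 0, γ(n e^β / 2) ≥ 1/2, and for all t ≥ n e^β / 2, 1 - γ(t) ≤ (1/2) exp( n²e^β / (2(n + e^{β/2})) - n t / (n + e^{β/2}) ). -/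
open Set Real

lemma barrier_ge (γ f' : ℝ → ℝ)
    (hd : ∀ t ∈ Ici (0:ℝ), HasDerivAt γ (f' t) t) (c δ : ℝ) (hδ : 0 < δ)
    (h0 : c ≤ γ 0)
    (hf : ∀ t, 0 ≤ t → c - δ < γ t → γ t < c → 0 ≤ f' t) :
    ∀ t, 0 ≤ t → c ≤ γ t := by
  intro t0 ht0
  by_contra hlt
  push_neg at hlt
  have hcont : ContinuousOn γ (Ici (0:ℝ)) :=
    fun t ht => (hd t ht).continuousAt.continuousWithinAt
  have hcont0 : ContinuousOn γ (Icc (0:ℝ) t0) := hcont.mono Icc_subset_Ici_self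
  set A : Set ℝ := {t ∈ Icc (0:ℝ) t0 | c ≤ γ t} with hA
  have hA0 : (0:ℝ) ∈ A := ⟨⟨le_refl _, ht0⟩, h0⟩
  have hAclosed : IsClosed A :=
    hcont0.preimage_isClosed_of_isClosed isClosed_Icc isClosed_Ici
  have hAcomp : IsCompact A :=
    isCompact_Icc.of_isClosed_subset hAclosed (fun t ht => ht.1)
  set a := sSup A with ha
  have haA : a ∈ A := hAcomp.sSup_mem ⟨0, hA0⟩
  have ha0 : 0 ≤ a := haA.1.1
  have halt : a < t0 := lt_of_le_of_ne haA.1.2 (fun h => by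
    rw [h] at haA; linarith [haA.2])
  have hgt : ∀ t, a < t → t ≤ t0 → γ t < c := by
    intro t h1 h2
    by_contra h
    push_neg at h
    have htA : t ∈ A := ⟨⟨le_trans ha0 h1.le, h2⟩, h⟩
    exact absurd (le_csSup hAcomp.bddAbove htA) (not_le.2 h1)
  set B : Set ℝ := {t ∈ Icc a t0 | γ t ≤ c - δ} with hB
  rcases eq_empty_or_nonempty B with hBe | hBne
  · obtain ⟨ξ, hξ, hs⟩ := exists_hasDerivAt_eq_slope γ f' halt
      (hcont.mono (fun x hx => le_trans ha0 hx.1))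
      (fun x hx => hd x (le_trans ha0 hx.1.le))
    have hξ0 : (0:ℝ) ≤ ξ := le_trans ha0 hξ.1.le
    have hξc : γ ξ < c := hgt ξ hξ.1 hξ.2.le
    have hξδ : c - δ < γ ξ := by
      by_contra h
      push_neg at h
      have : ξ ∈ B := ⟨⟨hξ.1.le, hξ.2.le⟩, h⟩
      rw [hBe] at this
      exact this
    have hpos := hf ξ hξ0 hξδ hξc
    rw [hs] at hpos
    have hnum : γ t0 - γ a < 0 := by linarith [haA.2]
    have := div_neg_of_neg_of_pos hnum (sub_pos.2 halt)
    linarith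
  · have hBclosed : IsClosed B :=
      (hcont0.mono (Icc_subset_Icc_left ha0)).preimage_isClosed_of_isClosed
        isClosed_Icc isClosed_Iic
    have hBcomp : IsCompact B :=
      isCompact_Icc.of_isClosed_subset hBclosed (fun t ht => ht.1)
    set b := sInf B with hb
    have hbB : b ∈ B := hBcomp.sInf_mem hBne
    have hbt0 : b ≤ t0 := hbB.1.2
    have hab : a < b := lt_of_le_of_ne hbB.1.1 (fun h => by
      rw [← h] at hbB; linarith [haA.2, hbB.2])
    have hlow : ∀ t, a ≤ t → t < b → c - δ < γ t := by
      intro t h1 h2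
      by_contra h
      push_neg at h
      have : t ∈ B := ⟨⟨h1, le_trans h2.le hbt0⟩, h⟩
      exact absurd (csInf_le hBcomp.bddBelow this) (not_le.2 h2)
    obtain ⟨ξ, hξ, hs⟩ := exists_hasDerivAt_eq_slope γ f' hab
      (hcont.mono (fun x hx => le_trans ha0 hx.1))
      (fun x hx => hd x (le_trans ha0 hx.1.le))
    have hξ0 : (0:ℝ) ≤ ξ := le_trans ha0 hξ.1.le
    have hξc : γ ξ < c := hgt ξ hξ.1 (le_trans hξ.2.le hbt0)
    have hξδ : c - δ < γ ξ := hlow ξ hξ.1.le hξ.2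
    have hpos := hf ξ hξ0 hξδ hξc
    rw [hs] at hpos
    have hnum : γ b - γ a < 0 := by linarith [haA.2, hbB.2]
    have := div_neg_of_neg_of_pos hnum (sub_pos.2 hab)
    linarith

lemma barrier_le (γ f' : ℝ → ℝ)
    (hd : ∀ t ∈ Ici (0:ℝ), HasDerivAt γ (f' t) t) (c δ : ℝ) (hδ : 0 < δ)
    (h0 : γ 0 ≤ c)
    (hf : ∀ t, 0 ≤ t → c < γ t → γ t < c + δ → f' t ≤ 0) :
    ∀ t, 0 ≤ t → γ t ≤ c := by
  have key := barrier_ge (fun t => -γ t) (fun t => -f' t)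
    (fun t ht => (hd t ht).neg) (-c) δ hδ (by simpa using h0)
    (fun t ht h1 h2 => by
      show (0:ℝ) ≤ -f' t
      have := hf t ht (by simpa using h2) (by linarith)
      linarith)
  intro t ht
  have := key t ht
  linarith

set_option maxHeartbeats 2000000

/-- Properties of the solution of the scalar ODE
`γ' = 2 e^{βγ}(1-γ)((n-1)γ+1)/(e^β + (n-1)e^{βγ})`, `γ(0) = 0`, describing the
common inner product of initially orthogonal particles under the self-attention
dynamics: `γ` is non-decreasing, stays in `[0,1]`, satisfies `γ(n e^β/2) ≥ 1/2`,
and converges to `1` exponentially. -/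
theorem stmt_14 (n : ℕ) (hn : 2 ≤ n) (β : ℝ) (hβ : 0 ≤ β) (γ : ℝ → ℝ)
    (hinit : γ 0 = 0)
    (hode : ∀ t ∈ Ici (0:ℝ), HasDerivAt γ
      (2 * exp (β * γ t) * (1 - γ t) * (((n : ℝ) - 1) * γ t + 1) /
        (exp β + ((n : ℝ) - 1) * exp (β * γ t))) t) :
    MonotoneOn γ (Ici (0:ℝ)) ∧
    (∀ t ∈ Ici (0:ℝ), 0 ≤ γ t ∧ γ t ≤ 1) ∧
    1 / 2 ≤ γ ((n : ℝ) * exp β / 2) ∧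
    ∀ t, (n : ℝ) * exp β / 2 ≤ t →
      1 - γ t ≤ (1 / 2) * exp ((n : ℝ) ^ 2 * exp β / (2 * ((n : ℝ) + exp (β / 2)))
        - (n : ℝ) * t / ((n : ℝ) + exp (β / 2))) := by
  set F : ℝ → ℝ := fun t => 2 * exp (β * γ t) * (1 - γ t) * (((n : ℝ) - 1) * γ t + 1) /
      (exp β + ((n : ℝ) - 1) * exp (β * γ t)) with hF
  have hode' : ∀ t ∈ Ici (0:ℝ), HasDerivAt γ (F t) t := hode
  have hn2 : (2:ℝ) ≤ (n:ℝ) := by exact_mod_cast hn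
  have hn1 : (1:ℝ) ≤ (n:ℝ) - 1 := by linarith
  have hden : ∀ t, 0 < exp β + ((n : ℝ) - 1) * exp (β * γ t) := by
    intro t
    nlinarith [exp_pos β, exp_pos (β * γ t)]
  have hcont : ContinuousOn γ (Ici (0:ℝ)) :=
    fun t ht => (hode' t ht).continuousAt.continuousWithinAt
  -- upper bound
  have hub : ∀ t, 0 ≤ t → γ t ≤ 1 := by
    apply barrier_le γ F hode' 1 1 one_pos (by simp [hinit])
    intro t ht h1 h2
    have hfac : (0:ℝ) < ((n : ℝ) - 1) * γ t + 1 := by nlinarith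
    have hnum : 2 * exp (β * γ t) * (1 - γ t) * (((n : ℝ) - 1) * γ t + 1) ≤ 0 := by
      nlinarith [exp_pos (β * γ t), mul_pos (exp_pos (β * γ t)) hfac]
    exact div_nonpos_of_nonpos_of_nonneg hnum (hden t).le
  -- lower bound
  have hlb : ∀ t, 0 ≤ t → 0 ≤ γ t := by
    apply barrier_ge γ F hode' 0 ((1:ℝ)/(n:ℝ)) (by positivity) (by simp [hinit])
    intro t ht h1 h2
    have hfac : (0:ℝ) < ((n : ℝ) - 1) * γ t + 1 := by
      have hnpos : (0:ℝ) < (n:ℝ) := by linarith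
      have h3 : -γ t < 1/(n:ℝ) := by linarith
      have h4 : -γ t * (n:ℝ) < 1 := (lt_div_iff₀ hnpos).1 h3
      nlinarith
    have hnum : 0 ≤ 2 * exp (β * γ t) * (1 - γ t) * (((n : ℝ) - 1) * γ t + 1) := by
      nlinarith [exp_pos (β * γ t), mul_pos (exp_pos (β * γ t)) hfac]
    exact div_nonneg hnum (hden t).le
  -- derivative nonneg
  have hFnonneg : ∀ t, 0 ≤ t → 0 ≤ F t := by
    intro t ht
    have h0 := hlb t ht
    have h1 := hub t ht
    apply div_nonneg _ (hden t).le
    have : (0:ℝ) ≤ ((n : ℝ) - 1) * γ t + 1 := by nlinarith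
    nlinarith [exp_pos (β * γ t), mul_nonneg (exp_pos (β * γ t)).le this]
  -- monotone
  have hmono : MonotoneOn γ (Ici (0:ℝ)) := by
    apply monotoneOn_of_deriv_nonneg (convex_Ici 0) hcont
    · intro x hx
      rw [interior_Ici] at hx
      exact (hode' x (mem_Ici.mpr (le_of_lt hx))).differentiableAt.differentiableWithinAt
    · intro x hx
      rw [interior_Ici] at hx
      rw [(hode' x (mem_Ici.mpr (le_of_lt hx))).deriv]
      exact hFnonneg x (le_of_lt hx)
  set T : ℝ := (n : ℝ) * exp β / 2 with hT
  have hTpos : 0 < T := by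
    have := exp_pos β
    rw [hT]; nlinarith
  -- half at time T
  have h3 : 1 / 2 ≤ γ T := by
    by_contra hc
    push_neg at hc
    obtain ⟨ξ, hξ, hs⟩ := exists_hasDerivAt_eq_slope γ F hTpos
      (hcont.mono (fun x hx => hx.1))
      (fun x hx => hode' x hx.1.le)
    have hξ0 : (0:ℝ) ≤ ξ := hξ.1.le
    have hg0 : 0 ≤ γ ξ := hlb ξ hξ0
    have hghalf : γ ξ ≤ 1/2 :=
      le_trans (hmono (mem_Ici.mpr hξ0) (mem_Ici.mpr hTpos.le) hξ.2.le) hc.le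
    have hE1 : 1 ≤ exp (β * γ ξ) := one_le_exp (mul_nonneg hβ hg0)
    have hEe : exp (β * γ ξ) ≤ exp β := exp_le_exp.2 (by nlinarith [hub ξ hξ0])
    have hX : (1:ℝ) ≤ ((n : ℝ) - 1) * γ ξ + 1 := by nlinarith
    have step1 : (1:ℝ) ≤ 2 * exp (β * γ ξ) * (1 - γ ξ) := by
      nlinarith [mul_nonneg (by linarith : (0:ℝ) ≤ exp (β * γ ξ) - 1)
        (by linarith : (0:ℝ) ≤ 1 - 2 * γ ξ)]
    have hnum : (1:ℝ) ≤ 2 * exp (β * γ ξ) * (1 - γ ξ) * (((n : ℝ) - 1) * γ ξ + 1) := by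
      nlinarith
    have hden2 : exp β + ((n : ℝ) - 1) * exp (β * γ ξ) ≤ (n : ℝ) * exp β := by
      nlinarith [mul_nonneg (by linarith : (0:ℝ) ≤ (n:ℝ) - 1)
        (by linarith : (0:ℝ) ≤ exp β - exp (β * γ ξ))]
    have hnE : (0:ℝ) < (n : ℝ) * exp β := by nlinarith [exp_pos β]
    have hFξ : 1 / ((n : ℝ) * exp β) ≤ F ξ := by
      rw [hF]
      exact div_le_div₀ (by linarith) hnum (hden ξ) hden2
    rw [hs, hinit, sub_zero, sub_zero] at hFξ
    have hγT : 1 / ((n : ℝ) * exp β) * T ≤ γ T := by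
      have := (le_div_iff₀ hTpos).1 hFξ
      linarith
    have heq : 1 / ((n : ℝ) * exp β) * T = 1/2 := by
      rw [hT]; field_simp
    linarith
  -- exponential convergence
  refine ⟨hmono, fun t ht => ⟨hlb t ht, hub t ht⟩, h3, ?_⟩
  set E : ℝ := exp (β / 2) with hEdef
  have hEpos : 0 < E := exp_pos _
  have hnEpos : (0:ℝ) < (n : ℝ) + E := by linarith
  set a : ℝ := (n : ℝ) / ((n : ℝ) + E) with hadef
  have hEE : E * E = exp β := by
    rw [hEdef, ← exp_add]; ring_nf
  have hFge : ∀ s, T ≤ s → a * (1 - γ s) ≤ F s := by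
    intro s hs
    have hs0 : (0:ℝ) ≤ s := le_trans hTpos.le hs
    have hg1 : γ s ≤ 1 := hub s hs0
    have hghalf : 1/2 ≤ γ s :=
      le_trans h3 (hmono (mem_Ici.mpr hTpos.le) (mem_Ici.mpr hs0) hs)
    have hE2 : E ≤ exp (β * γ s) := by
      rw [hEdef]
      exact exp_le_exp.2 (by nlinarith [mul_le_mul_of_nonneg_left hghalf hβ])
    have hden' : exp β + ((n : ℝ) - 1) * exp (β * γ s) ≤ ((n : ℝ) + E) * exp (β * γ s) := by
      nlinarith [mul_nonneg (by linarith : (0:ℝ) ≤ 1 + E)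
        (by linarith : (0:ℝ) ≤ exp (β * γ s) - E), hEE, hEpos]
    have hnum' : (n : ℝ) * exp (β * γ s) * (1 - γ s) ≤
        2 * exp (β * γ s) * (1 - γ s) * (((n : ℝ) - 1) * γ s + 1) := by
      have hq : (0:ℝ) ≤ 2 * (((n:ℝ) - 1) * γ s + 1) - n := by
        nlinarith [mul_le_mul_of_nonneg_left hghalf (by linarith : (0:ℝ) ≤ (n:ℝ) - 1)]
      nlinarith [mul_nonneg (mul_nonneg (exp_pos (β * γ s)).le
        (by linarith : (0:ℝ) ≤ 1 - γ s)) hq]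
    have hg : a * (1 - γ s) = (n : ℝ) * (1 - γ s) / ((n : ℝ) + E) := by
      rw [hadef]; ring
    rw [hF, hg, div_le_div_iff₀ hnEpos (hden s)]
    calc (n : ℝ) * (1 - γ s) * (exp β + ((n : ℝ) - 1) * exp (β * γ s))
        ≤ (n : ℝ) * (1 - γ s) * (((n : ℝ) + E) * exp (β * γ s)) := by
          apply mul_le_mul_of_nonneg_left hden'
          nlinarith
      _ = (n : ℝ) * exp (β * γ s) * (1 - γ s) * ((n : ℝ) + E) := by ring
      _ ≤ 2 * exp (β * γ s) * (1 - γ s) * (((n : ℝ) - 1) * γ s + 1) * ((n : ℝ) + E) := by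
          apply mul_le_mul_of_nonneg_right hnum' hnEpos.le
  set G : ℝ → ℝ := fun s => (1 - γ s) * exp (a * s) with hG
  have hGd : ∀ s, 0 ≤ s → HasDerivAt G
      ((0 - F s) * exp (a * s) + (1 - γ s) * (exp (a * s) * (a * 1))) s := by
    intro s hs
    exact ((hasDerivAt_const s 1).sub (hode' s hs)).mul
      (((hasDerivAt_id s).const_mul a).exp)
  have hanti : AntitoneOn G (Ici T) := by
    apply antitoneOn_of_deriv_nonpos (convex_Ici T)
      (fun s hs => (hGd s (le_trans hTpos.le hs)).continuousAt.continuousWithinAt)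
    · intro x hx
      rw [interior_Ici] at hx
      exact (hGd x (le_trans hTpos.le hx.le)).differentiableAt.differentiableWithinAt
    · intro x hx
      rw [interior_Ici] at hx
      rw [(hGd x (le_trans hTpos.le hx.le)).deriv]
      have hkey := hFge x hx.le
      nlinarith [mul_le_mul_of_nonneg_left hkey (exp_pos (a * x)).le]
  intro t ht
  have hGle : G t ≤ G T := hanti (mem_Ici.mpr le_rfl) (mem_Ici.mpr ht) ht
  have hGT : G T ≤ (1/2) * exp (a * T) := by
    rw [hG]
    apply mul_le_mul_of_nonneg_right (by linarith) (exp_pos _).le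
  have hmul := mul_le_mul_of_nonneg_right (hGle.trans hGT) (exp_pos (-(a * t))).le
  rw [hG] at hmul
  simp only [] at hmul
  rw [mul_assoc, ← exp_add, add_neg_cancel, exp_zero, mul_one, mul_assoc, ← exp_add] at hmul
  have hexp_eq : a * T + -(a * t) = (n : ℝ) ^ 2 * exp β / (2 * ((n : ℝ) + E))
      - (n : ℝ) * t / ((n : ℝ) + E) := by
    rw [hadef, hT]
    field_simp
    ring
  rw [hexp_eq] at hmul
  exact hmul
end

section
/- Let g(τ) = e^{β cos τ} ((d-1) cos τ - β sin² τ) for β > 0 and d ≥ 2, and let τ*_β ∈ [0, π/2) be the unique solution in [0, π/2) of β sin²(τ) = (d-1) cos(τ). Then g(τ) < 0 for all τ ∈ [0, π] with τ > τ*_β, and τ*_β is strictly decreasing as a function of β with τ*_β · sqrt(β/(d-1)) → 1 as β → ∞. -/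
open Set Real Filter

open Topology

/-- The Hessian kernel `g(τ) = e^{β cos τ}((d-1) cos τ - β sin² τ)`. -/
noncomputable def hessKernel (d : ℕ) (β τ : ℝ) : ℝ :=
  exp (β * cos τ) * (((d : ℝ) - 1) * cos τ - β * sin τ ^ 2)

/-- For `d ≥ 2`, if `τ* : (0,∞) → [0, π/2)` picks for each `β > 0` a solution of
`β sin² τ = (d-1) cos τ`, then: this solution is unique in `[0, π/2)`;
`g(τ) < 0` for all `τ ∈ [0,π]` with `τ > τ*_β`; `τ*` is strictly decreasing in
`β`; and `τ*_β √(β/(d-1)) → 1` as `β → ∞`. -/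
theorem stmt_19 (d : ℕ) (hd : 2 ≤ d) (τstar : ℝ → ℝ)
    (hmem : ∀ β > 0, τstar β ∈ Ico (0 : ℝ) (π / 2))
    (heq : ∀ β > 0, β * sin (τstar β) ^ 2 = ((d : ℝ) - 1) * cos (τstar β)) :
    (∀ β > 0, ∀ τ ∈ Ico (0 : ℝ) (π / 2),
        β * sin τ ^ 2 = ((d : ℝ) - 1) * cos τ → τ = τstar β) ∧
    (∀ β > 0, ∀ τ ∈ Icc (0 : ℝ) π, τstar β < τ → hessKernel d β τ < 0) ∧
    StrictAntiOn τstar (Ioi (0 : ℝ)) ∧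
    Tendsto (fun β => τstar β * Real.sqrt (β / ((d : ℝ) - 1))) atTop (nhds 1) := by
  have hπ := pi_pos
  have hc : (1:ℝ) ≤ (d:ℝ) - 1 := by
    have : (2:ℝ) ≤ (d:ℝ) := by exact_mod_cast hd
    linarith
  have hc0 : (0:ℝ) < (d:ℝ) - 1 := by linarith
  -- strict monotonicity of F
  have Fmono : ∀ β : ℝ, 0 < β → ∀ a b : ℝ, 0 ≤ a → a < b → b ≤ π/2 →
      β * sin a ^ 2 - ((d:ℝ)-1) * cos a < β * sin b ^ 2 - ((d:ℝ)-1) * cos b := by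
    intro β hβ a b ha hab hb
    have hs : sin a < sin b :=
      strictMonoOn_sin ⟨by linarith, by linarith⟩ ⟨by linarith, hb⟩ hab
    have hsa : 0 ≤ sin a := sin_nonneg_of_nonneg_of_le_pi ha (by linarith)
    have hcos : cos b < cos a :=
      cos_lt_cos_of_nonneg_of_le_pi ha (by linarith) hab
    have h1 : sin a ^ 2 < sin b ^ 2 := by nlinarith
    have h2 := mul_lt_mul_of_pos_left h1 hβ
    have h3 := mul_lt_mul_of_pos_left hcos hc0
    linarith
  -- basic facts about τstar
  have hcospos : ∀ β : ℝ, 0 < β → 0 < cos (τstar β) := by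
    intro β hβ
    exact cos_pos_of_mem_Ioo ⟨by linarith [(hmem β hβ).1], (hmem β hβ).2⟩
  have hsinpos : ∀ β : ℝ, 0 < β → 0 < sin (τstar β) := by
    intro β hβ
    have hs : 0 ≤ sin (τstar β) :=
      sin_nonneg_of_nonneg_of_le_pi (hmem β hβ).1 (by linarith [(hmem β hβ).2])
    have h2 : 0 < β * sin (τstar β) ^ 2 := by
      rw [heq β hβ]; exact mul_pos hc0 (hcospos β hβ)
    rcases hs.lt_or_eq with h | h
    · exact h
    · exfalso; rw [← h] at h2; simp at h2
  have hτpos : ∀ β : ℝ, 0 < β → 0 < τstar β := by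
    intro β hβ
    rcases lt_or_eq_of_le (hmem β hβ).1 with h | h
    · exact h
    · exfalso; have := hsinpos β hβ; rw [← h, sin_zero] at this; linarith
  refine ⟨?_, ?_, ?_, ?_⟩
  · -- uniqueness
    intro β hβ τ hτ hτeq
    by_contra hne
    rcases lt_or_gt_of_ne hne with h | h
    · have := Fmono β hβ τ (τstar β) hτ.1 h (le_of_lt (hmem β hβ).2)
      rw [hτeq, heq β hβ] at this; linarith
    · have := Fmono β hβ (τstar β) τ (hmem β hβ).1 h (le_of_lt hτ.2)
      rw [hτeq, heq β hβ] at this; linarith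
  · -- negativity of hessKernel
    intro β hβ τ hτ hlt
    have key : ((d:ℝ) - 1) * cos τ - β * sin τ ^ 2 < 0 := by
      rcases le_or_gt τ (π/2) with h | h
      · have := Fmono β hβ (τstar β) τ (hmem β hβ).1 hlt h
        rw [heq β hβ] at this; linarith
      · rcases lt_or_eq_of_le hτ.2 with hτπ | hτπ
        · have hsp : 0 < sin τ := sin_pos_of_pos_of_lt_pi (by linarith) hτπ
          have hcn : cos τ ≤ 0 :=
            cos_nonpos_of_pi_div_two_le_of_le h.le (by linarith)
          have h1 : ((d:ℝ)-1) * cos τ ≤ 0 := mul_nonpos_of_nonneg_of_nonpos hc0.le hcn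
          have h2 : 0 < β * sin τ ^ 2 := mul_pos hβ (pow_pos hsp 2)
          linarith
        · rw [hτπ, sin_pi, cos_pi]; nlinarith
    exact mul_neg_of_pos_of_neg (exp_pos _) key
  · -- strict anti
    intro β₁ hβ₁ β₂ hβ₂ h12
    simp only [mem_Ioi] at hβ₁ hβ₂
    by_contra hle
    push_neg at hle
    rcases lt_or_eq_of_le hle with h | h
    · -- τstar β₁ < τstar β₂
      have hF := Fmono β₂ (by linarith) (τstar β₁) (τstar β₂) (hmem β₁ hβ₁).1 h
        (le_of_lt (hmem β₂ (by linarith)).2)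
      have e1 := heq β₁ hβ₁
      have e2 := heq β₂ (by linarith)
      have hs1 := hsinpos β₁ hβ₁
      have hmul := mul_lt_mul_of_pos_right h12 (pow_pos hs1 2)
      linarith
    · -- equal
      have e1 := heq β₁ hβ₁
      have e2 := heq β₂ (by linarith)
      rw [h] at e1
      have hs2 := hsinpos β₂ (by linarith)
      have hmul := mul_lt_mul_of_pos_right h12 (pow_pos hs2 2)
      linarith
  · -- limit
    -- sin (τstar β) → 0
    have hdiv : Tendsto (fun β : ℝ => ((d:ℝ)-1) / β) atTop (𝓝 0) :=
      tendsto_const_nhds.div_atTop tendsto_id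
    have hsqrtdiv : Tendsto (fun β : ℝ => Real.sqrt (((d:ℝ)-1) / β)) atTop (𝓝 0) := by
      have := (continuous_sqrt.tendsto 0).comp hdiv
      simpa [Function.comp_def] using this
    have hsin0 : Tendsto (fun β => sin (τstar β)) atTop (𝓝 0) := by
      apply squeeze_zero'
      · filter_upwards [eventually_gt_atTop (0:ℝ)] with β hβ
        exact (hsinpos β hβ).le
      · filter_upwards [eventually_gt_atTop (0:ℝ)] with β hβ
        have h1 : sin (τstar β) ^ 2 ≤ ((d:ℝ)-1) / β := by
          rw [le_div_iff₀ hβ]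
          have := heq β hβ
          nlinarith [cos_le_one (τstar β), hcospos β hβ]
        calc sin (τstar β) = Real.sqrt (sin (τstar β) ^ 2) :=
              (Real.sqrt_sq (hsinpos β hβ).le).symm
          _ ≤ Real.sqrt (((d:ℝ)-1) / β) := Real.sqrt_le_sqrt h1
      · exact hsqrtdiv
    have hτ0 : Tendsto τstar atTop (𝓝 0) := by
      have := (Real.continuous_arcsin.tendsto 0).comp hsin0
      rw [show Real.arcsin 0 = 0 by simp] at this
      apply this.congr'
      filter_upwards [eventually_gt_atTop (0:ℝ)] with β hβ
      exact Real.arcsin_sin (by linarith [(hmem β hβ).1]) (by linarith [(hmem β hβ).2])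
    have hτ0' : Tendsto τstar atTop (𝓝[≠] (0:ℝ)) := by
      apply tendsto_nhdsWithin_of_tendsto_nhds_of_eventually_within _ hτ0
      filter_upwards [eventually_gt_atTop (0:ℝ)] with β hβ
      exact (hτpos β hβ).ne'
    -- x / sin x * sqrt (cos x) → 1 as x → 0, x ≠ 0
    have h1 : Tendsto (fun x : ℝ => x / sin x) (𝓝[≠] (0:ℝ)) (𝓝 1) := by
      have hder := hasDerivAt_sin 0
      rw [hasDerivAt_iff_tendsto_slope] at hder
      rw [cos_zero] at hder
      have := hder.inv₀ one_ne_zero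
      rw [inv_one] at this
      apply this.congr
      intro x
      simp [slope_def_field, inv_div]
    have h2 : Tendsto (fun x : ℝ => Real.sqrt (cos x)) (𝓝[≠] (0:ℝ)) (𝓝 1) := by
      have : Tendsto (fun x : ℝ => Real.sqrt (cos x)) (𝓝 (0:ℝ)) (𝓝 1) := by
        have := (continuous_sqrt.comp continuous_cos).tendsto 0
        simpa [Function.comp_def] using this
      exact this.mono_left nhdsWithin_le_nhds
    have hlim : Tendsto (fun x : ℝ => x / sin x * Real.sqrt (cos x)) (𝓝[≠] (0:ℝ)) (𝓝 1) := by
      simpa using h1.mul h2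
    have hcomp := hlim.comp hτ0'
    apply hcomp.congr'
    filter_upwards [eventually_gt_atTop (0:ℝ)] with β hβ
    have hs := hsinpos β hβ
    have hcβ := hcospos β hβ
    have hβc : β / ((d:ℝ)-1) = cos (τstar β) / sin (τstar β) ^ 2 := by
      have := heq β hβ
      field_simp
      nlinarith
    simp only [Function.comp]
    rw [hβc, Real.sqrt_div hcβ.le, Real.sqrt_sq hs.le]
    ring
end
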